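/- Let M, n be positive integers, H an M×n complex matrix, h ∈ ℂᴹ, and N > 0 a real number. Suppose (u_d)_{d=1,…,n} is an orthonormal basis of ℂⁿ with (Hᴴ H) u_d = λ_d u_d where λ_d ≥ 0 are real. Let b = Hᴴ h and c_d = ⟨u_d, b⟩. Suppose γ ∈ ℝ satisfies γ > λ_d for all d and Σ_{d=1}^{n} |c_d|² / (γ − λ_d)² = N. Define φ* = Σ_{d=1}^{n} (c_d / (γ − λ_d)) u_d. Then ‖φ*‖² = N, and for every φ ∈ ℂⁿ with ‖φ‖² ≤ N one has ‖h + Hφ‖² ≤ ‖h + Hφ*‖². That is, φ* is a global maximizer of ‖h + Hφ‖² over the ball {φ : ‖φ‖² ≤ N}. -/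

import Mathlib

open scoped BigOperators
open Matrix

lemma star_mul_self' (z : ℂ) : star z * z = ((‖z‖ ^ 2 : ℝ) : ℂ) := by
  rw [Complex.star_def, mul_comm, Complex.mul_conj, Complex.normSq_eq_norm_sq]

/-- sum of squared norms as a dot product. -/
lemma sum_sq_eq_dot {k : ℕ} (x : Fin k → ℂ) :
    ((star x) ⬝ᵥ x) = ((∑ i, ‖x i‖ ^ 2 : ℝ) : ℂ) := by
  push_cast
  simp only [dotProduct, Pi.star_apply]
  congr 1
  ext i
  rw [star_mul_self']
  push_cast
  ring

/-- per-coordinate bound: λ‖z‖² + 2Re(c̄z) ≤ γ‖z‖² + ‖c‖²/(γ-λ). -/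
lemma coord_bound (lam γ : ℝ) (hlt : lam < γ) (cd z : ℂ) :
    lam * ‖z‖ ^ 2 + 2 * ((starRingEnd ℂ) cd * z).re ≤
      γ * ‖z‖ ^ 2 + ‖cd‖ ^ 2 / (γ - lam) := by
  have hp : 0 < γ - lam := sub_pos.mpr hlt
  have h1 : ((starRingEnd ℂ) cd * z).re ≤ ‖cd‖ * ‖z‖ := by
    calc ((starRingEnd ℂ) cd * z).re ≤ ‖(starRingEnd ℂ) cd * z‖ := Complex.re_le_norm _
      _ = ‖cd‖ * ‖z‖ := by rw [norm_mul, Complex.norm_conj]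
  have h2 : ‖cd‖ ^ 2 / (γ - lam) * (γ - lam) = ‖cd‖ ^ 2 := div_mul_cancel₀ _ (ne_of_gt hp)
  nlinarith [sq_nonneg ((γ - lam) * ‖z‖ - ‖cd‖), norm_nonneg z, norm_nonneg cd]

theorem stmt1 {M n : ℕ} (hM : 0 < M) (hn : 0 < n)
    (H : Matrix (Fin M) (Fin n) ℂ) (h : Fin M → ℂ) (N : ℝ) (hN : 0 < N)
    (u : Fin n → Fin n → ℂ) (lam : Fin n → ℝ)
    (horth : ∀ d d', (∑ i, star (u d i) * u d' i) = if d = d' then 1 else 0)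
    (heig : ∀ d, (Hᴴ * H).mulVec (u d) = (lam d : ℂ) • u d)
    (hlam : ∀ d, 0 ≤ lam d)
    (b : Fin n → ℂ) (hb : b = Hᴴ.mulVec h)
    (c : Fin n → ℂ) (hc : ∀ d, c d = ∑ i, star (u d i) * b i)
    (γ : ℝ) (hγ : ∀ d, lam d < γ)
    (hroot : (∑ d, ‖c d‖ ^ 2 / (γ - lam d) ^ 2) = N)
    (φs : Fin n → ℂ) (hφs : φs = ∑ d, (c d / ((γ : ℂ) - (lam d : ℂ))) • u d) :
    (∑ i, ‖φs i‖ ^ 2) = N ∧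
      ∀ φ : Fin n → ℂ, (∑ i, ‖φ i‖ ^ 2) ≤ N →
        (∑ a, ‖h a + H.mulVec φ a‖ ^ 2) ≤ ∑ a, ‖h a + H.mulVec φs a‖ ^ 2 := by
  classical
  set V : Matrix (Fin n) (Fin n) ℂ := Matrix.of fun i d => u d i with hVdef
  have hVapp : ∀ i d, V i d = u d i := fun i d => rfl
  have hVstV : Vᴴ * V = 1 := by
    ext d d'
    simpa [Matrix.mul_apply, Matrix.conjTranspose_apply, Matrix.one_apply, hVapp]
      using horth d d'
  have hVVst : V * Vᴴ = 1 := mul_eq_one_comm.mp hVstV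
  set A : Matrix (Fin n) (Fin n) ℂ := Hᴴ * H with hAdef
  set D : Matrix (Fin n) (Fin n) ℂ := Matrix.diagonal (fun d => (lam d : ℂ)) with hDdef
  have hAV : A * V = V * D := by
    ext i d
    have h1 := congrFun (heig d) i
    simp only [Matrix.mulVec, dotProduct, Pi.smul_apply, smul_eq_mul] at h1
    simp only [Matrix.mul_apply, hDdef, Matrix.diagonal_apply, hVapp]
    rw [h1]
    simp [mul_ite, mul_zero, mul_comm]
  have hDform : Vᴴ * A * V = D := by
    rw [Matrix.mul_assoc, hAV, ← Matrix.mul_assoc, hVstV, Matrix.one_mul]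
  have hcvec : c = Vᴴ.mulVec b := by
    funext d
    simp [hc d, Matrix.mulVec, dotProduct, Matrix.conjTranspose_apply, hVapp]
  -- Parseval
  have parseval : ∀ a : Fin n → ℂ, (∑ i, ‖(V.mulVec a) i‖ ^ 2) = ∑ d, ‖a d‖ ^ 2 := by
    intro a
    have e : star (V.mulVec a) ⬝ᵥ (V.mulVec a) = star a ⬝ᵥ a := by
      rw [Matrix.star_mulVec, ← Matrix.dotProduct_mulVec, Matrix.mulVec_mulVec, hVstV,
        Matrix.one_mulVec]
    rw [sum_sq_eq_dot, sum_sq_eq_dot] at e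
    exact_mod_cast e
  -- objective expansion
  have obj : ∀ a : Fin n → ℂ,
      (∑ iM, ‖h iM + (H.mulVec (V.mulVec a)) iM‖ ^ 2)
        = (∑ iM, ‖h iM‖ ^ 2)
          + ∑ d, (lam d * ‖a d‖ ^ 2 + 2 * ((starRingEnd ℂ) (c d) * (a d)).re) := by
    intro a
    set φ : Fin n → ℂ := V.mulVec a with hφdef
    set w : Fin M → ℂ := h + H.mulVec φ with hwdef
    have hb' : star h ᵥ* H = star b := by
      rw [hb, Matrix.star_mulVec, Matrix.conjTranspose_conjTranspose]
    have hc' : star b ᵥ* V = star c := by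
      rw [hcvec, Matrix.star_mulVec, Matrix.conjTranspose_conjTranspose]
    have T1 : star h ⬝ᵥ (H.mulVec φ) = star c ⬝ᵥ a := by
      rw [Matrix.dotProduct_mulVec, hb', hφdef, Matrix.dotProduct_mulVec, hc']
    have T2 : star (H.mulVec φ) ⬝ᵥ h = star (star c ⬝ᵥ a) := by
      rw [Matrix.star_dotProduct, T1]
    have T3 : star (H.mulVec φ) ⬝ᵥ (H.mulVec φ) = star a ⬝ᵥ (D.mulVec a) := by
      rw [Matrix.star_mulVec, ← Matrix.dotProduct_mulVec, Matrix.mulVec_mulVec, ← hAdef,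
        hφdef, Matrix.star_mulVec, Matrix.mulVec_mulVec, ← Matrix.dotProduct_mulVec,
        Matrix.mulVec_mulVec, ← Matrix.mul_assoc, hDform]
    have expand : star w ⬝ᵥ w
        = star h ⬝ᵥ h + ((star c ⬝ᵥ a) + star (star c ⬝ᵥ a)) + star a ⬝ᵥ (D.mulVec a) := by
      rw [hwdef, star_add, add_dotProduct, dotProduct_add,
        dotProduct_add, T1, T2, T3]
      ring
    have hre := congrArg Complex.re expand
    rw [sum_sq_eq_dot, sum_sq_eq_dot] at hre
    simp only [Complex.ofReal_re, Complex.add_re, Complex.add_re] at hre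
    have hgl : (∑ iM, ‖h iM + (H.mulVec φ) iM‖ ^ 2) = ∑ iM, ‖w iM‖ ^ 2 := rfl
    rw [hgl, hre]
    have hcross : (star c ⬝ᵥ a).re + (star (star c ⬝ᵥ a)).re
        = ∑ d, 2 * ((starRingEnd ℂ) (c d) * (a d)).re := by
      rw [show star (star c ⬝ᵥ a) = (starRingEnd ℂ) (star c ⬝ᵥ a) from rfl, Complex.conj_re]
      simp only [dotProduct, Pi.star_apply, Complex.re_sum]
      rw [← Finset.sum_add_distrib]
      apply Finset.sum_congr rfl
      intro d _
      simp only [Complex.star_def]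
      ring
    have hquad : (star a ⬝ᵥ (D.mulVec a)).re = ∑ d, lam d * ‖a d‖ ^ 2 := by
      simp only [dotProduct, Pi.star_apply, Matrix.mulVec_diagonal, hDdef, Complex.re_sum]
      apply Finset.sum_congr rfl
      intro d _
      have : star (a d) * ((lam d : ℂ) * a d) = ((lam d * ‖a d‖ ^ 2 : ℝ) : ℂ) := by
        rw [mul_comm ((lam d : ℂ)) (a d), ← mul_assoc, mul_comm (star (a d)) (a d),
          mul_comm (a d) (star (a d)), star_mul_self']
        push_cast
        ring
      rw [this, Complex.ofReal_re]
    rw [hcross, hquad, Finset.sum_add_distrib]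
    ring
  -- coordinates of φs
  set as : Fin n → ℂ := fun d => c d / ((γ : ℂ) - (lam d : ℂ)) with hasdef
  have hφsV : φs = V.mulVec as := by
    funext i
    rw [hφs]
    simp only [Matrix.mulVec, dotProduct, hVapp, Finset.sum_apply, Pi.smul_apply,
      smul_eq_mul, hasdef]
    apply Finset.sum_congr rfl
    intro d _
    ring
  have hcast : ∀ d : Fin n, ((γ : ℂ) - (lam d : ℂ)) = ((γ - lam d : ℝ) : ℂ) := by
    intro d; push_cast; ring
  have hnormas : ∀ d, ‖as d‖ ^ 2 = ‖c d‖ ^ 2 / (γ - lam d) ^ 2 := by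
    intro d
    have hp : 0 < γ - lam d := sub_pos.mpr (hγ d)
    rw [hasdef]
    simp only [hcast d, norm_div, Complex.norm_real, Real.norm_eq_abs, abs_of_pos hp, div_pow]
  have part1 : (∑ i, ‖φs i‖ ^ 2) = N := by
    rw [hφsV, parseval]
    rw [← hroot]
    exact Finset.sum_congr rfl fun d _ => hnormas d
  refine ⟨part1, ?_⟩
  intro φ hφ
  have hγpos : 0 < γ := lt_of_le_of_lt (hlam ⟨0, hn⟩) (hγ ⟨0, hn⟩)
  set a : Fin n → ℂ := Vᴴ.mulVec φ with hadef
  have hφa : V.mulVec a = φ := by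
    rw [hadef, Matrix.mulVec_mulVec, hVVst, Matrix.one_mulVec]
  have hφsum : (∑ d, ‖a d‖ ^ 2) ≤ N := by
    rw [← parseval a, hφa]; exact hφ
  rw [← hφa, hφsV, obj a, obj as]
  have gs_eq : ∀ d, lam d * ‖as d‖ ^ 2 + 2 * ((starRingEnd ℂ) (c d) * (as d)).re
      = γ * (‖c d‖ ^ 2 / (γ - lam d) ^ 2) + ‖c d‖ ^ 2 / (γ - lam d) := by
    intro d
    have hp : 0 < γ - lam d := sub_pos.mpr (hγ d)
    have hre : ((starRingEnd ℂ) (c d) * (as d)).re = ‖c d‖ ^ 2 / (γ - lam d) := by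
      have : (starRingEnd ℂ) (c d) * (as d) = ((‖c d‖ ^ 2 / (γ - lam d) : ℝ) : ℂ) := by
        rw [hasdef]
        simp only [hcast d]
        rw [div_eq_mul_inv, ← mul_assoc]
        rw [show (starRingEnd ℂ) (c d) * c d = star (c d) * c d from rfl, star_mul_self']
        push_cast
        ring
      rw [this, Complex.ofReal_re]
    rw [hre, hnormas d]
    field_simp
    ring
  have rhs_eq : (∑ d, (lam d * ‖as d‖ ^ 2 + 2 * ((starRingEnd ℂ) (c d) * (as d)).re))
      = γ * N + ∑ d, ‖c d‖ ^ 2 / (γ - lam d) := by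
    rw [Finset.sum_congr rfl fun d _ => gs_eq d, Finset.sum_add_distrib, ← Finset.mul_sum,
      hroot]
  have lhs_le : (∑ d, (lam d * ‖a d‖ ^ 2 + 2 * ((starRingEnd ℂ) (c d) * (a d)).re))
      ≤ γ * N + ∑ d, ‖c d‖ ^ 2 / (γ - lam d) := by
    calc (∑ d, (lam d * ‖a d‖ ^ 2 + 2 * ((starRingEnd ℂ) (c d) * (a d)).re))
        ≤ ∑ d, (γ * ‖a d‖ ^ 2 + ‖c d‖ ^ 2 / (γ - lam d)) :=
          Finset.sum_le_sum fun d _ => coord_bound (lam d) γ (hγ d) (c d) (a d)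
      _ = γ * (∑ d, ‖a d‖ ^ 2) + ∑ d, ‖c d‖ ^ 2 / (γ - lam d) := by
          rw [Finset.sum_add_distrib, Finset.mul_sum]
      _ ≤ γ * N + ∑ d, ‖c d‖ ^ 2 / (γ - lam d) := by
          have := mul_le_mul_of_nonneg_left hφsum (le_of_lt hγpos)
          linarith
  rw [rhs_eq]
  linarith [lhs_le]
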